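/- (Contraction of the perpendicular magnetization) For the map m⃗ ↦ m⃗' := m⃗ − 2μ[(n⃗×m⃗) sin h cos h − n⃗×(n⃗×m⃗) sin² h], the perpendicular component satisfies ‖m⃗'_⊥‖² = (1 − 4μ(1−μ) sin² h) ‖m⃗_⊥‖². In particular, if μ ∈ (0,1) and h is not an integer multiple of π, then ‖m⃗'_⊥‖ < ‖m⃗_⊥‖ whenever m⃗_⊥ ≠ 0. -/
import Mathlib

open scoped BigOperators
open Matrix

noncomputable section

/-- Euclidean norm on ℝ³. -/
def norm3 (v : Fin 3 → ℝ) : ℝ := Real.sqrt (∑ i, (v i) ^ 2)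

/-- dot product on ℝ³. -/
def dot3 (u v : Fin 3 → ℝ) : ℝ := ∑ i, u i * v i

/-- the component of `m⃗` perpendicular to the unit vector `n⃗`: `m⃗_⊥ = m⃗ − (m⃗·n⃗)n⃗`. -/
def perp (n m : Fin 3 → ℝ) : Fin 3 → ℝ := fun i => m i - dot3 m n * n i

/-- the Bloch-vector map `m⃗ ↦ m⃗' = m⃗ − 2μ[(n⃗×m⃗) sin h cos h − n⃗×(n⃗×m⃗) sin² h]`. -/
def mprime (μ h : ℝ) (n m : Fin 3 → ℝ) : Fin 3 → ℝ := fun i =>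
  m i - 2 * μ * ((crossProduct n m) i * Real.sin h * Real.cos h -
    (crossProduct n (crossProduct n m)) i * (Real.sin h) ^ 2)

/-- **contraction of the perpendicular magnetization.**
`‖m⃗'_⊥‖² = (1 − 4μ(1−μ) sin² h) ‖m⃗_⊥‖²`; in particular, for `μ ∈ (0,1)` and `h` not an
integer multiple of `π`, `‖m⃗'_⊥‖ < ‖m⃗_⊥‖` whenever `m⃗_⊥ ≠ 0`. -/
theorem kac_perp_contraction
    (n : Fin 3 → ℝ) (hn : norm3 n = 1) (h μ : ℝ) (hμ : μ ∈ Set.Icc (0 : ℝ) 1)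
    (m : Fin 3 → ℝ) :
    norm3 (perp n (mprime μ h n m)) ^ 2 =
      (1 - 4 * μ * (1 - μ) * (Real.sin h) ^ 2) * norm3 (perp n m) ^ 2 ∧
    (μ ∈ Set.Ioo (0 : ℝ) 1 → (∀ k : ℤ, h ≠ k * Real.pi) → perp n m ≠ 0 →
      norm3 (perp n (mprime μ h n m)) < norm3 (perp n m)) := by
  have hsq : ∀ v : Fin 3 → ℝ, norm3 v ^ 2 = ∑ i, (v i) ^ 2 := fun v =>
    Real.sq_sqrt (Finset.sum_nonneg fun i _ => sq_nonneg _)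
  have hn2 : n 0 ^ 2 + n 1 ^ 2 + n 2 ^ 2 = 1 := by
    have h1 : norm3 n ^ 2 = 1 := by rw [hn]; norm_num
    rw [hsq, Fin.sum_univ_three] at h1
    exact h1
  set s := Real.sin h with hs
  set c := Real.cos h with hc
  have hsc : s ^ 2 + c ^ 2 = 1 := Real.sin_sq_add_cos_sq h
  have key : norm3 (perp n (mprime μ h n m)) ^ 2 =
      (1 - 4 * μ * (1 - μ) * s ^ 2) * norm3 (perp n m) ^ 2 := by
    rw [hsq, hsq]
    simp only [perp, mprime, dot3, cross_apply, Fin.sum_univ_three, Matrix.cons_val_zero,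
      Matrix.cons_val_one, Matrix.head_cons, Matrix.cons_val_two, Matrix.tail_cons, ← hs, ← hc]
    linear_combination ((-4)*(m 2)^2*(s)^2*(μ) + (4)*(m 2)^2*(s)^2*(c)^2*(μ)^2 + (4)*(m 2)^2*(s)^4*(μ)^2 + (-4)*(m 1)^2*(s)^2*(μ) + (4)*(m 1)^2*(s)^2*(c)^2*(μ)^2 + (4)*(m 1)^2*(s)^4*(μ)^2 + (-4)*(m 0)^2*(s)^2*(μ) + (4)*(m 0)^2*(s)^2*(μ)^2 + (4)*(n 2)^2*(m 2)^2*(s)^2*(μ) + (-4)*(n 2)^2*(m 2)^2*(s)^2*(μ)^2 + (4)*(n 2)^2*(m 1)^2*(s)^4*(μ)^2 + (4)*(n 2)^2*(m 0)^2*(s)^4*(μ)^2 + (8)*(n 1)*(n 2)*(m 1)*(m 2)*(s)^2*(μ) + (-8)*(n 1)*(n 2)*(m 1)*(m 2)*(s)^2*(μ)^2 + (-8)*(n 1)*(n 2)*(m 1)*(m 2)*(s)^4*(μ)^2 + (4)*(n 1)^2*(m 2)^2*(s)^4*(μ)^2 + (4)*(n 1)^2*(m 1)^2*(s)^2*(μ)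 + (-4)*(n 1)^2*(m 1)^2*(s)^2*(μ)^2 + (4)*(n 1)^2*(m 0)^2*(s)^4*(μ)^2 + (8)*(n 0)*(n 2)*(m 0)*(m 2)*(s)^2*(μ) + (-8)*(n 0)*(n 2)*(m 0)*(m 2)*(s)^2*(μ)^2 + (-8)*(n 0)*(n 2)*(m 0)*(m 2)*(s)^4*(μ)^2 + (8)*(n 0)*(n 1)*(m 0)*(m 1)*(s)^2*(μ) + (-8)*(n 0)*(n 1)*(m 0)*(m 1)*(s)^2*(μ)^2 + (-8)*(n 0)*(n 1)*(m 0)*(m 1)*(s)^4*(μ)^2 + (4)*(n 0)^2*(m 2)^2*(s)^4*(μ)^2 + (4)*(n 0)^2*(m 1)^2*(s)^4*(μ)^2 + (4)*(n 0)^2*(m 0)^2*(s)^2*(μ) + (-4)*(n 0)^2*(m 0)^2*(s)^2*(μ)^2) * hn2 + ((4)*(m 2)^2*(s)^2*(μ)^2 + (4)*(m 1)^2*(s)^2*(μ)^2 + (-4)*(n 2)^2*(m 2)^2*(s)^2*(μ)^2 + (4)*(n 2)^2*(m 0)^2*(s)^2*(μ)^2 + (-8)*(n 1)*(n 2)*(m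 1)*(m 2)*(s)^2*(μ)^2 + (-4)*(n 1)^2*(m 1)^2*(s)^2*(μ)^2 + (4)*(n 1)^2*(m 0)^2*(s)^2*(μ)^2 + (-8)*(n 0)*(n 2)*(m 0)*(m 2)*(s)^2*(μ)^2 + (-8)*(n 0)*(n 1)*(m 0)*(m 1)*(s)^2*(μ)^2) * hsc
  refine ⟨key, fun hμo hk hp => ?_⟩
  have hs0 : s ≠ 0 := by
    intro h0
    rcases Real.sin_eq_zero_iff.mp h0 with ⟨k, hk'⟩
    exact hk k hk'.symm
  have h1 : 0 < μ := hμo.1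
  have h2 : μ < 1 := hμo.2
  have h3 : 0 < s ^ 2 := by positivity
  have hfac : 1 - 4 * μ * (1 - μ) * s ^ 2 < 1 := by
    nlinarith [mul_pos (mul_pos h1 (by linarith : (0:ℝ) < 1 - μ)) h3]
  obtain ⟨i, hi⟩ : ∃ i, perp n m i ≠ 0 := by
    by_contra hc'
    push_neg at hc'
    exact hp (funext hc')
  have hsumpos : 0 < ∑ i, (perp n m i) ^ 2 :=
    Finset.sum_pos' (fun j _ => sq_nonneg _) ⟨i, Finset.mem_univ i, by positivity⟩
  have hpos : 0 < norm3 (perp n m) := Real.sqrt_pos.mpr hsumpos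
  have hX : 0 < norm3 (perp n m) ^ 2 := by positivity
  have hlt2 : norm3 (perp n (mprime μ h n m)) ^ 2 < norm3 (perp n m) ^ 2 := by
    rw [key]
    nlinarith
  exact lt_of_pow_lt_pow_left₀ 2 hpos.le hlt2

end
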